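/- arXiv:1111.7126 — 2 statements merged into one kernel-verified Lean document; each statement's English description precedes it below -/
import Mathlib

section
/- Under a special Lorentz boost, a sphere of radius R moving with constant velocity v in the unprimed frame corresponds, at fixed primed time, to an ellipsoid whose volume satisfies vol(E_{t'}) = l³/(α(1 - Vv¹/c²)) · vol(B_t). -/
open MeasureTheory

noncomputable section

/-- The ball `B_t` of radius `R` centered at `tv`, for a sphere moving with constant
velocity `v` in the unprimed frame. -/
def movingBall (v : Fin 3 → ℝ) (R t : ℝ) : Set (Fin 3 → ℝ) :=
  {r | ∑ i, (r i - t * v i) ^ 2 ≤ R ^ 2}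

/-- `E_{t'}`: the set of spatial points `x'` such that `(x', t')` is the image, under the
conformal special Lorentz transformation with velocity `V` and factor `l`, of an event
of the world-tube of the moving ball. -/
def imageEllipsoid (c V l α : ℝ) (v : Fin 3 → ℝ) (R t' : ℝ) : Set (Fin 3 → ℝ) :=
  {y | ∃ r : Fin 3 → ℝ, ∃ t : ℝ, r ∈ movingBall v R t ∧
    y 0 = l * α * (r 0 - V * t) ∧ y 1 = l * r 1 ∧ y 2 = l * r 2 ∧
    t' = l * α * (t - V * r 0 / c ^ 2)}

/-- Translation invariance: the volume of the moving ball does not depend on time. -/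
lemma movingBall_volume_const (v : Fin 3 → ℝ) (R : ℝ) (s : ℝ) :
    volume (movingBall v R s) = volume (movingBall v R 0) := by
  have hset : movingBall v R s = (fun x => x + (-(s • v))) ⁻¹' movingBall v R 0 := by
    ext x
    have hsum : ∑ i, ((x + (-(s • v))) i - 0 * v i) ^ 2 = ∑ i, (x i - s * v i) ^ 2 :=
      Finset.sum_congr rfl fun i _ => by simp [smul_eq_mul]; ring
    simp only [movingBall, Set.mem_setOf_eq, Set.mem_preimage, hsum]
  rw [hset, measure_preimage_add_right]

/-- Under a special Lorentz boost, a sphere of radius `R` moving with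
constant velocity `v` in the unprimed frame corresponds, at fixed primed time `t'`, to
an ellipsoid whose volume satisfies
`vol(E_{t'}) = l³/(α(1 - Vv¹/c²)) · vol(B_t)`. -/
theorem ellipsoid_volume
    (c V l α : ℝ) (hc : 0 < c) (hV : |V| < c) (hl : 0 < l)
    (hα : α = (Real.sqrt (1 - V ^ 2 / c ^ 2))⁻¹)
    (v : Fin 3 → ℝ) (hv : ∑ i, v i ^ 2 < c ^ 2) (R : ℝ) (hR : 0 < R) :
    ∀ t' t : ℝ,
      volume (imageEllipsoid c V l α v R t') =
        ENNReal.ofReal (l ^ 3 / (α * (1 - V * v 0 / c ^ 2))) *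
          volume (movingBall v R t) := by
  intro t' t
  have hc0 : c ≠ 0 := ne_of_gt hc
  have hc2 : (0:ℝ) < c ^ 2 := by positivity
  have hV2 : V ^ 2 < c ^ 2 := by
    have h1 := abs_lt.mp hV
    nlinarith [h1.1, h1.2]
  have h1V : (0:ℝ) < 1 - V ^ 2 / c ^ 2 := by
    have : V ^ 2 / c ^ 2 < 1 := (div_lt_one hc2).mpr hV2
    linarith
  have hαpos : 0 < α := by
    rw [hα]; exact inv_pos.mpr (Real.sqrt_pos.mpr h1V)
  have hα0 : α ≠ 0 := ne_of_gt hαpos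
  have hl0 : l ≠ 0 := ne_of_gt hl
  have hα2 : α ^ 2 * (1 - V ^ 2 / c ^ 2) = 1 := by
    have hs : (Real.sqrt (1 - V ^ 2 / c ^ 2)) ^ 2 = 1 - V ^ 2 / c ^ 2 :=
      Real.sq_sqrt h1V.le
    rw [hα, inv_pow, hs, inv_mul_cancel₀ (ne_of_gt h1V)]
  have hα2' : α ^ 2 * (c ^ 2 - V ^ 2) = c ^ 2 := by
    have := hα2
    field_simp at this
    linarith
  have hv0 : (v 0) ^ 2 < c ^ 2 := by
    rw [Fin.sum_univ_three] at hv
    nlinarith [sq_nonneg (v 1), sq_nonneg (v 2)]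
  have hkpos : (0:ℝ) < 1 - V * v 0 / c ^ 2 := by
    have h1 : V * v 0 < c ^ 2 := by nlinarith [sq_nonneg (V - v 0)]
    have : V * v 0 / c ^ 2 < 1 := (div_lt_one hc2).mpr h1
    linarith
  have hk0 : (1:ℝ) - V * v 0 / c ^ 2 ≠ 0 := ne_of_gt hkpos
  have hlα : l * α ≠ 0 := mul_ne_zero hl0 hα0
  -- the affine correspondence: translation ∘ A ∘ M⁻¹
  set A : Matrix (Fin 3) (Fin 3) ℝ := !![l / α, 0, 0; 0, l, 0; 0, 0, l] with hAdef
  set M : Matrix (Fin 3) (Fin 3) ℝ :=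
    !![1 - V * v 0 / c ^ 2, 0, 0;
       -(V * v 1 / c ^ 2), 1, 0;
       -(V * v 2 / c ^ 2), 0, 1] with hMdef
  set b : Fin 3 → ℝ := ![-(V * t'), 0, 0] with hbdef
  have hAapp : ∀ u : Fin 3 → ℝ, (Matrix.toLin' A) u = ![l / α * u 0, l * u 1, l * u 2] := by
    intro u
    funext i
    fin_cases i <;>
      simp [hAdef, Matrix.toLin'_apply, Matrix.mulVec, dotProduct, Fin.sum_univ_three]
  have hMapp : ∀ u : Fin 3 → ℝ, (Matrix.toLin' M) u =
      ![(1 - V * v 0 / c ^ 2) * u 0,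
        -(V * v 1 / c ^ 2) * u 0 + u 1,
        -(V * v 2 / c ^ 2) * u 0 + u 2] := by
    intro u
    funext i
    fin_cases i <;>
      simp [hMdef, Matrix.toLin'_apply, Matrix.mulVec, dotProduct, Fin.sum_univ_three]
  -- key set identity
  have hset : imageEllipsoid c V l α v R t' =
      (fun x => b + x) '' ((Matrix.toLin' A) ''
        ((Matrix.toLin' M) ⁻¹' movingBall v R (t' / (l * α)))) := by
    ext y
    simp only [imageEllipsoid, Set.mem_setOf_eq, Set.mem_image, Set.mem_preimage,
      exists_exists_and_eq_and]
    constructor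
    · rintro ⟨r, t1, hr, hy0, hy1, hy2, ht'⟩
      have ht1 : t1 = t' / (l * α) + V * r 0 / c ^ 2 := by
        have h : t' / (l * α) = t1 - V * r 0 / c ^ 2 := by
          rw [ht']; field_simp
        rw [h]; ring
      refine ⟨r, ?_, ?_⟩
      · simp only [movingBall, Set.mem_setOf_eq, Fin.sum_univ_three, hMapp,
          Matrix.cons_val_zero, Matrix.cons_val_one, Matrix.head_cons, Matrix.cons_val_two,
          Matrix.tail_cons, Matrix.head_fin_const] at hr ⊢
        have e0 : (1 - V * v 0 / c ^ 2) * r 0 - t' / (l * α) * v 0 = r 0 - t1 * v 0 := by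
          rw [ht1]; ring
        have e1 : -(V * v 1 / c ^ 2) * r 0 + r 1 - t' / (l * α) * v 1 = r 1 - t1 * v 1 := by
          rw [ht1]; ring
        have e2 : -(V * v 2 / c ^ 2) * r 0 + r 2 - t' / (l * α) * v 2 = r 2 - t1 * v 2 := by
          rw [ht1]; ring
        rw [e0, e1, e2]; exact hr
      · have h0 : (b + (Matrix.toLin' A) r) 0 = y 0 := by
          simp only [hAapp, hbdef, Pi.add_apply, Matrix.cons_val_zero]
          rw [hy0, ht1]
          field_simp
          linear_combination (-l * r 0) * hα2'
        have h1 : (b + (Matrix.toLin' A) r) 1 = y 1 := by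
          simp only [hAapp, hbdef, Pi.add_apply, Matrix.cons_val_one, Matrix.head_cons, Matrix.cons_val_zero]
          rw [hy1]; ring
        have h2 : (b + (Matrix.toLin' A) r) 2 = y 2 := by
          simp only [hAapp, hbdef, Pi.add_apply, Matrix.cons_val_two, Matrix.tail_cons,
            Matrix.head_cons]
          rw [hy2]; ring
        funext i
        fin_cases i
        · exact h0
        · exact h1
        · exact h2
    · rintro ⟨r, hr, rfl⟩
      refine ⟨r, t' / (l * α) + V * r 0 / c ^ 2, ?_, ?_, ?_, ?_, ?_⟩
      · simp only [movingBall, Set.mem_setOf_eq, Fin.sum_univ_three, hMapp,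
          Matrix.cons_val_zero, Matrix.cons_val_one, Matrix.head_cons, Matrix.cons_val_two,
          Matrix.tail_cons, Matrix.head_fin_const] at hr ⊢
        have e0 : r 0 - (t' / (l * α) + V * r 0 / c ^ 2) * v 0
            = (1 - V * v 0 / c ^ 2) * r 0 - t' / (l * α) * v 0 := by ring
        have e1 : r 1 - (t' / (l * α) + V * r 0 / c ^ 2) * v 1
            = -(V * v 1 / c ^ 2) * r 0 + r 1 - t' / (l * α) * v 1 := by ring
        have e2 : r 2 - (t' / (l * α) + V * r 0 / c ^ 2) * v 2
            = -(V * v 2 / c ^ 2) * r 0 + r 2 - t' / (l * α) * v 2 := by ring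
        rw [e0, e1, e2]; exact hr
      · simp only [hAapp, hbdef, Pi.add_apply, Matrix.cons_val_zero]
        field_simp
        linear_combination (-l * r 0) * hα2'
      · simp only [hAapp, hbdef, Pi.add_apply, Matrix.cons_val_one, Matrix.head_cons, Matrix.cons_val_zero]
        ring
      · simp only [hAapp, hbdef, Pi.add_apply, Matrix.cons_val_two, Matrix.tail_cons,
          Matrix.head_cons]
        ring
      · field_simp; ring
  -- determinants
  have hdetA : A.det = l ^ 3 / α := by
    rw [hAdef, Matrix.det_fin_three]
    simp
    field_simp
  have hdetM : M.det = 1 - V * v 0 / c ^ 2 := by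
    rw [hMdef, Matrix.det_fin_three]
    simp
  have hdetM' : LinearMap.det (Matrix.toLin' M) ≠ 0 := by
    rw [LinearMap.det_toLin', hdetM]; exact hk0
  -- volume computation
  calc volume (imageEllipsoid c V l α v R t')
      = volume ((fun x => b + x) '' ((Matrix.toLin' A) ''
          ((Matrix.toLin' M) ⁻¹' movingBall v R (t' / (l * α))))) := by rw [hset]
    _ = volume ((Matrix.toLin' A) '' ((Matrix.toLin' M) ⁻¹' movingBall v R (t' / (l * α)))) := by
        rw [Set.image_add_left, measure_preimage_add]
    _ = ENNReal.ofReal |LinearMap.det (Matrix.toLin' A)| *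
          volume ((Matrix.toLin' M) ⁻¹' movingBall v R (t' / (l * α))) :=
        Measure.addHaar_image_linearMap volume _ _
    _ = ENNReal.ofReal |LinearMap.det (Matrix.toLin' A)| *
          (ENNReal.ofReal |(LinearMap.det (Matrix.toLin' M))⁻¹| *
            volume (movingBall v R (t' / (l * α)))) := by
        rw [Measure.addHaar_preimage_linearMap volume hdetM']
    _ = ENNReal.ofReal (l ^ 3 / (α * (1 - V * v 0 / c ^ 2))) * volume (movingBall v R t) := by
        rw [LinearMap.det_toLin', LinearMap.det_toLin', hdetA, hdetM,
          movingBall_volume_const v R (t' / (l * α)), movingBall_volume_const v R t,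
          ← mul_assoc, ← ENNReal.ofReal_mul (by positivity),
          abs_of_pos (by positivity), abs_of_pos (by positivity)]
        congr 2
        field_simp

end
end

section
/- For a retarded integrand, the ratio of the volume element to the retarded distance is conformally invariant under the conformal special Lorentz transformation: vol'₃/s' = l² · vol₃/s, where s = |r - r₀| and s' = |r' - r'₀| with the primed point obtained by transforming (r, t₀ - s/c). -/
open Matrix

noncomputable section

set_option maxHeartbeats 1000000

/-- For a retarded integrand, the ratio of the volume element to the
retarded distance is conformally invariant under the conformal special Lorentz
transformation: with `F` mapping `r` to the spatial part of the image of the retarded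
event `(r, t₀ - s/c)`, `s = |r - r₀|`, one has
(i) `det JF = l³α(1 + (V/c)(x¹ - x₀¹)/s)`,
(ii) `s' = |F(r) - r'₀| = lαs(1 + (V/c)(x¹ - x₀¹)/s)`,
(iii) hence `det JF / s' = l²/s`. -/
theorem retarded_volume_element_conformal
    (c V l α : ℝ) (hc : 0 < c) (hV : |V| < c) (hl : 0 < l)
    (hα : α = (Real.sqrt (1 - V ^ 2 / c ^ 2))⁻¹)
    (r₀ : Fin 3 → ℝ) (t₀ : ℝ)
    (s : (Fin 3 → ℝ) → ℝ) (hs : ∀ r, s r = Real.sqrt (∑ i, (r i - r₀ i) ^ 2))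
    (F : (Fin 3 → ℝ) → Fin 3 → ℝ)
    (hF : ∀ r, F r = ![l * α * (r 0 - V * (t₀ - s r / c)), l * r 1, l * r 2])
    (r₀' : Fin 3 → ℝ)
    (hr₀' : r₀' = ![l * α * (r₀ 0 - V * t₀), l * r₀ 1, l * r₀ 2])
    (s' : (Fin 3 → ℝ) → ℝ)
    (hs' : ∀ r, s' r = Real.sqrt (∑ i, (F r i - r₀' i) ^ 2)) :
    ∀ r : Fin 3 → ℝ, r ≠ r₀ →
      (Matrix.of fun i j : Fin 3 =>
          fderiv ℝ (fun x => F x i) r (Pi.single j 1)).det =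
        l ^ 3 * α * (1 + V / c * (r 0 - r₀ 0) / s r) ∧
      s' r = l * α * s r * (1 + V / c * (r 0 - r₀ 0) / s r) ∧
      (Matrix.of fun i j : Fin 3 =>
          fderiv ℝ (fun x => F x i) r (Pi.single j 1)).det / s' r =
        l ^ 2 / s r := by
  intro r hr
  -- positivity facts
  have hαpos : 0 < α := by
    rw [hα]
    have h1 : 0 < 1 - V ^ 2 / c ^ 2 := by
      rw [sub_pos, div_lt_one (by positivity)]
      have := sq_abs V
      nlinarith [abs_nonneg V]
    positivity
  set Q : ℝ := ∑ i, (r i - r₀ i) ^ 2 with hQ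
  have hQpos : 0 < Q := by
    obtain ⟨i, hi⟩ : ∃ i, r i ≠ r₀ i := by
      by_contra h
      push_neg at h
      exact hr (funext h)
    apply Finset.sum_pos' (fun j _ => by positivity)
    exact ⟨i, Finset.mem_univ i, by have h := sub_ne_zero.mpr hi; positivity⟩
  have hsr : s r = Real.sqrt Q := hs r
  have hsrpos : 0 < s r := by rw [hsr]; positivity
  have hsq : s r ^ 2 = Q := by rw [hsr]; exact Real.sq_sqrt hQpos.le
  -- derivative of the sum of squares
  have hq : HasFDerivAt (fun x : Fin 3 → ℝ => ∑ i, (x i - r₀ i) ^ 2)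
      (∑ i, (2 * (r i - r₀ i)) • (ContinuousLinearMap.proj i : (Fin 3 → ℝ) →L[ℝ] ℝ)) r := by
    apply HasFDerivAt.fun_sum
    intro i _
    have h1 : HasFDerivAt (fun x : Fin 3 → ℝ => x i - r₀ i)
        (ContinuousLinearMap.proj i : (Fin 3 → ℝ) →L[ℝ] ℝ) r :=
      (hasFDerivAt_apply i r).sub_const _
    have := h1.fun_mul h1
    rw [show ((2 : ℝ) * (r i - r₀ i)) • (ContinuousLinearMap.proj i : (Fin 3 → ℝ) →L[ℝ] ℝ)
        = (r i - r₀ i) • ContinuousLinearMap.proj i + (r i - r₀ i) • ContinuousLinearMap.proj i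
        by rw [two_mul, add_smul]]
    simpa [sq] using this
  have hSd : HasFDerivAt (fun x : Fin 3 → ℝ => Real.sqrt (∑ i, (x i - r₀ i) ^ 2))
      ((1 / (2 * Real.sqrt Q)) • (∑ i, (2 * (r i - r₀ i)) •
        (ContinuousLinearMap.proj i : (Fin 3 → ℝ) →L[ℝ] ℝ))) r :=
    (Real.hasDerivAt_sqrt hQpos.ne').comp_hasFDerivAt r hq
  set DS : (Fin 3 → ℝ) →L[ℝ] ℝ := (1 / (2 * Real.sqrt Q)) • (∑ i, (2 * (r i - r₀ i)) •
      (ContinuousLinearMap.proj i : (Fin 3 → ℝ) →L[ℝ] ℝ)) with hDSdef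
  have hDS : ∀ j : Fin 3, DS (Pi.single j 1) = (r j - r₀ j) / s r := by
    intro j
    rw [hDSdef]
    simp only [ContinuousLinearMap.smul_apply, ContinuousLinearMap.sum_apply,
      ContinuousLinearMap.proj_apply, smul_eq_mul]
    rw [Finset.sum_eq_single j]
    · rw [hsr]
      simp only [Pi.single_eq_same]
      have h2 : Real.sqrt Q ≠ 0 := by positivity
      field_simp
    · intro b _ hb
      rw [Pi.single_eq_of_ne hb]
      ring
    · intro h; exact absurd (Finset.mem_univ j) h
  have hcne : c ≠ 0 := hc.ne'
  have hsne : s r ≠ 0 := hsrpos.ne'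
  -- entry values of the Jacobian matrix
  have hF0fun : (fun x => F x 0) = fun x : Fin 3 → ℝ =>
      l * α * (x 0 - V * (t₀ - c⁻¹ * Real.sqrt (∑ i, (x i - r₀ i) ^ 2))) := by
    funext x; rw [hF, hs]; simp only [Matrix.cons_val_zero]; ring
  have hF1fun : (fun x => F x 1) = fun x : Fin 3 → ℝ => l * x 1 := by
    funext x; rw [hF]; simp
  have hF2fun : (fun x => F x 2) = fun x : Fin 3 → ℝ => l * x 2 := by
    funext x; rw [hF]; simp
  have E0 : ∀ j : Fin 3, fderiv ℝ (fun x => F x 0) r (Pi.single j 1)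
      = l * α * ((if (0 : Fin 3) = j then 1 else 0) + V / c * ((r j - r₀ j) / s r)) := by
    intro j
    have h0 : HasFDerivAt (fun x : Fin 3 → ℝ =>
        l * α * (x 0 - V * (t₀ - c⁻¹ * Real.sqrt (∑ i, (x i - r₀ i) ^ 2)))) _ r :=
      ((hasFDerivAt_apply (0 : Fin 3) r).sub
        (((hSd.const_mul c⁻¹).const_sub t₀).const_mul V)).const_mul (l * α)
    rw [hF0fun, h0.fderiv]
    simp only [ContinuousLinearMap.smul_apply, ContinuousLinearMap.sub_apply,
      ContinuousLinearMap.neg_apply, ContinuousLinearMap.proj_apply, hDS j,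
      smul_eq_mul, Pi.single_apply, ContinuousLinearMap.coe_smul', Pi.smul_apply]
    ring
  have E1 : ∀ j : Fin 3, fderiv ℝ (fun x => F x 1) r (Pi.single j 1)
      = l * (if j = 1 then 1 else 0) := by
    intro j
    have h1 : HasFDerivAt (fun x : Fin 3 → ℝ => l * x 1)
        (l • (ContinuousLinearMap.proj 1 : (Fin 3 → ℝ) →L[ℝ] ℝ)) r :=
      HasFDerivAt.const_mul (hasFDerivAt_apply (1 : Fin 3) r) l
    rw [hF1fun, h1.fderiv]
    simp [Pi.single_apply, eq_comm]
  have E2 : ∀ j : Fin 3, fderiv ℝ (fun x => F x 2) r (Pi.single j 1)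
      = l * (if j = 2 then 1 else 0) := by
    intro j
    have h2 : HasFDerivAt (fun x : Fin 3 → ℝ => l * x 2)
        (l • (ContinuousLinearMap.proj 2 : (Fin 3 → ℝ) →L[ℝ] ℝ)) r :=
      HasFDerivAt.const_mul (hasFDerivAt_apply (2 : Fin 3) r) l
    rw [hF2fun, h2.fderiv]
    simp [Pi.single_apply, eq_comm]
  -- (i) determinant
  have hdet : (Matrix.of fun i j : Fin 3 =>
      fderiv ℝ (fun x => F x i) r (Pi.single j 1)).det =
      l ^ 3 * α * (1 + V / c * (r 0 - r₀ 0) / s r) := by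
    rw [Matrix.det_fin_three]
    simp only [Matrix.of_apply, E0, E1, E2]
    norm_num [Fin.ext_iff]
    field_simp
  -- (ii) transformed distance
  have hα2 : α ^ 2 * (1 - V ^ 2 / c ^ 2) = 1 := by
    have h1 : 0 < 1 - V ^ 2 / c ^ 2 := by
      rw [sub_pos, div_lt_one (by positivity)]
      nlinarith [abs_nonneg V, sq_abs V]
    rw [hα, inv_pow, Real.sq_sqrt h1.le, inv_mul_cancel₀ h1.ne']
  have hQ3 : Q = (r 0 - r₀ 0) ^ 2 + (r 1 - r₀ 1) ^ 2 + (r 2 - r₀ 2) ^ 2 := by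
    rw [hQ, Fin.sum_univ_three]
  have hle : |r 0 - r₀ 0| ≤ s r := by
    rw [hsr, ← Real.sqrt_sq_eq_abs]
    apply Real.sqrt_le_sqrt
    rw [hQ3]; nlinarith [sq_nonneg (r 1 - r₀ 1), sq_nonneg (r 2 - r₀ 2)]
  have hpos2 : 0 < s r + V / c * (r 0 - r₀ 0) := by
    have hmul : |V / c * (r 0 - r₀ 0)| ≤ |V| / c * s r := by
      rw [abs_mul, abs_div, abs_of_pos hc]
      exact mul_le_mul_of_nonneg_left hle (by positivity)
    have hVc : |V| / c < 1 := (div_lt_one hc).mpr hV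
    nlinarith [neg_abs_le (V / c * (r 0 - r₀ 0)), abs_nonneg V]
  have hsum' : (∑ i, (F r i - r₀' i) ^ 2)
      = (l * α * (s r + V / c * (r 0 - r₀ 0))) ^ 2 := by
    rw [Fin.sum_univ_three, hF, hr₀']
    simp only [Matrix.cons_val_zero, Matrix.cons_val_one, Matrix.head_cons,
      Matrix.cons_val_two, Matrix.tail_cons]
    have hsq' : (r 0 - r₀ 0) ^ 2 + (r 1 - r₀ 1) ^ 2 + (r 2 - r₀ 2) ^ 2 = s r ^ 2 := by
      rw [hsq, hQ3]
    have hα2c : α ^ 2 * (c ^ 2 - V ^ 2) = c ^ 2 := by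
      field_simp at hα2
      linarith [hα2]
    field_simp
    linear_combination (((r 0 - r₀ 0) ^ 2 - s r ^ 2)) * hα2c + (c ^ 2) * hsq'
  have hs'val : s' r = l * α * s r * (1 + V / c * (r 0 - r₀ 0) / s r) := by
    rw [hs' r, hsum', Real.sqrt_sq (mul_nonneg (by positivity) hpos2.le)]
    field_simp
  refine ⟨hdet, hs'val, ?_⟩
  rw [hdet, hs'val]
  have hfac : 1 + V / c * (r 0 - r₀ 0) / s r = (s r + V / c * (r 0 - r₀ 0)) / s r := by
    field_simp
  rw [hfac]
  have hprod : 0 < l * α * s r * ((s r + V / c * (r 0 - r₀ 0)) / s r) :=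
    mul_pos (by positivity) (div_pos hpos2 hsrpos)
  rw [show l ^ 3 * α * ((s r + V / c * (r 0 - r₀ 0)) / s r)
      = (l ^ 2 / s r) * (l * α * s r * ((s r + V / c * (r 0 - r₀ 0)) / s r)) by
    field_simp]
  exact mul_div_cancel_right₀ _ hprod.ne'

end
end
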